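/- Let K be a field of characteristic 0 and L ⊇ K an algebraically closed field. Let V and W be K-vector spaces and F : V ⊗_K L → W ⊗_K L an L-linear map that commutes with the natural semilinear actions of Aut_K(L) on V ⊗_K L and W ⊗_K L (i.e. F ∘ (id_V ⊗ σ) = (id_W ⊗ σ) ∘ F for every σ ∈ Aut_K(L)). Then there is a unique K-linear map f : V → W with F = f ⊗_K id_L. -/

import Mathlib

open TensorProduct


section
variable (K : Type*) {L : Type*} (M : Type*) [Field K] [Field L] [Field M]
  [Algebra K L] [Algebra K M] [Algebra M L] [IsScalarTower K M L] [IsAlgClosed L]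

theorem myExtendAut (τ : M ≃ₐ[K] M) :
    ∃ σ : L ≃ₐ[K] L, ∀ m : M, σ (algebraMap M L m) = algebraMap M L (τ m) := by
  obtain ⟨ι, v, hv⟩ := exists_isTranscendenceBasis' M L
  haveI := IsAlgClosed.isAlgClosure_of_transcendence_basis v hv
  haveI : NoZeroSMulDivisors (Algebra.adjoin M (Set.range v)) L :=
    ⟨fun {c y} h => by
      rw [Algebra.smul_def, mul_eq_zero] at h
      exact h.imp_left (fun h' => (map_eq_zero_iff _ Subtype.val_injective).mp h')⟩
  let g : MvPolynomial ι M ≃ₐ[K] MvPolynomial ι M := MvPolynomial.mapAlgEquiv ι τ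
  let e : Algebra.adjoin M (Set.range v) ≃+* Algebra.adjoin M (Set.range v) :=
    hv.1.aevalEquiv.symm.toRingEquiv.trans (g.toRingEquiv.trans hv.1.aevalEquiv.toRingEquiv)
  let σ₀ : L ≃+* L := IsAlgClosure.equivOfEquiv L L e
  have he : ∀ m : M, e (algebraMap M (Algebra.adjoin M (Set.range v)) m)
      = algebraMap M (Algebra.adjoin M (Set.range v)) (τ m) := by
    intro m
    show hv.1.aevalEquiv (g (hv.1.aevalEquiv.symm (algebraMap M _ m))) = _
    rw [show hv.1.aevalEquiv.symm (algebraMap M _ m)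
        = algebraMap M (MvPolynomial ι M) m from (hv.1.aevalEquiv.symm).commutes m]
    rw [MvPolynomial.algebraMap_eq]
    show hv.1.aevalEquiv (MvPolynomial.map (τ : M →+* M) (MvPolynomial.C m)) = _
    rw [MvPolynomial.map_C]
    exact hv.1.aevalEquiv.commutes (τ m)
  have key : ∀ m : M, σ₀ (algebraMap M L m) = algebraMap M L (τ m) := by
    intro m
    rw [IsScalarTower.algebraMap_apply M (Algebra.adjoin M (Set.range v)) L,
      IsAlgClosure.equivOfEquiv_algebraMap, he,
      ← IsScalarTower.algebraMap_apply M (Algebra.adjoin M (Set.range v)) L]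
  have hK : ∀ k : K, σ₀ (algebraMap K L k) = algebraMap K L k := by
    intro k
    rw [IsScalarTower.algebraMap_apply K M L, key, τ.commutes]
  exact ⟨AlgEquiv.ofRingEquiv hK, fun m => key m⟩

end

section
variable {K L : Type*} [Field K] [Field L] [Algebra K L] [IsAlgClosed L]

theorem myMoveTrans {x : L} (hx : Transcendental K x) : ∃ σ : L ≃ₐ[K] L, σ x ≠ x := by
  classical
  have hsingle : AlgebraicIndependent K ((↑) : ({x} : Set L) → L) := by
    rw [algebraicIndependent_unique_type_iff]
    exact hx
  obtain ⟨u, hxu, hu⟩ := exists_maximal_algebraicIndependent ({x} : Set L) Set.univ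
    (Set.subset_univ _) hsingle
  have hv : IsTranscendenceBasis K ((↑) : u → L) := by
    refine ⟨hu.1.1, fun t ht hst => ?_⟩
    simp only [Subtype.range_coe_subtype, Set.setOf_mem_eq] at *
    exact hu.eq_of_le ⟨ht, Set.subset_univ _⟩ hst
  set v : u → L := ((↑) : u → L) with hvdef
  haveI := IsAlgClosed.isAlgClosure_of_transcendence_basis v hv
  haveI : NoZeroSMulDivisors (Algebra.adjoin K (Set.range v)) L :=
    ⟨fun {c y} h => by
      rw [Algebra.smul_def, mul_eq_zero] at h
      exact h.imp_left (fun h' => (map_eq_zero_iff _ Subtype.val_injective).mp h')⟩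
  have hxmem : x ∈ u := hxu rfl
  set i₀ : u := ⟨x, hxmem⟩
  -- the substitution automorphism X i ↦ X i + c i
  let c : u → K := fun i => if i = i₀ then 1 else 0
  let gf : MvPolynomial u K →ₐ[K] MvPolynomial u K :=
    MvPolynomial.aeval (fun i => MvPolynomial.X i + MvPolynomial.C (c i))
  let gb : MvPolynomial u K →ₐ[K] MvPolynomial u K :=
    MvPolynomial.aeval (fun i => MvPolynomial.X i - MvPolynomial.C (c i))
  have hfb : gf.comp gb = AlgHom.id K _ := by
    ext i : 1
    simp [gf, gb]
  have hbf : gb.comp gf = AlgHom.id K _ := by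
    ext i : 1
    simp [gf, gb]
  let g : MvPolynomial u K ≃ₐ[K] MvPolynomial u K := AlgEquiv.ofAlgHom gf gb hfb hbf
  let e : Algebra.adjoin K (Set.range v) ≃ₐ[K] Algebra.adjoin K (Set.range v) :=
    hv.1.aevalEquiv.symm.trans (g.trans hv.1.aevalEquiv)
  let σ₀ : L ≃+* L := IsAlgClosure.equivOfEquiv L L e.toRingEquiv
  have hK : ∀ k : K, σ₀ (algebraMap K L k) = algebraMap K L k := by
    intro k
    rw [IsScalarTower.algebraMap_apply K (Algebra.adjoin K (Set.range v)) L,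
      IsAlgClosure.equivOfEquiv_algebraMap]
    show algebraMap _ L (e (algebraMap K _ k)) = _
    rw [e.commutes, ← IsScalarTower.algebraMap_apply]
  have hxA : x ∈ Algebra.adjoin K (Set.range v) := Algebra.subset_adjoin ⟨i₀, rfl⟩
  have hx1 : algebraMap (Algebra.adjoin K (Set.range v)) L ⟨x, hxA⟩ = x := rfl
  have hsymm : hv.1.aevalEquiv.symm ⟨x, hxA⟩ = MvPolynomial.X i₀ := by
    rw [AlgEquiv.symm_apply_eq]
    apply Subtype.ext
    rw [AlgebraicIndependent.aevalEquiv_apply_coe]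
    simp
    rfl
  have hmove : σ₀ x = x + 1 := by
    conv_lhs => rw [← hx1]
    rw [show (σ₀ : L ≃+* L) (algebraMap (Algebra.adjoin K (Set.range v)) L ⟨x, hxA⟩)
      = algebraMap _ L (e.toRingEquiv ⟨x, hxA⟩) from
      IsAlgClosure.equivOfEquiv_algebraMap L L e.toRingEquiv ⟨x, hxA⟩]
    show (algebraMap _ L) (hv.1.aevalEquiv (g (hv.1.aevalEquiv.symm ⟨x, hxA⟩))) = _
    rw [hsymm]
    have : g (MvPolynomial.X i₀) = MvPolynomial.X i₀ + 1 := by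
      show gf (MvPolynomial.X i₀) = _
      simp [gf, c]
    rw [this]
    show (hv.1.aevalEquiv (MvPolynomial.X i₀ + 1) : L) = x + 1
    rw [AlgebraicIndependent.aevalEquiv_apply_coe]
    simp
    rfl
  refine ⟨AlgEquiv.ofRingEquiv hK, ?_⟩
  show σ₀ x ≠ x
  rw [hmove]
  simp

end

section
variable {K L : Type*} [Field K] [Field L] [Algebra K L] [IsAlgClosed L] [CharZero K]

theorem myFixedMem {x : L} (h : ∀ σ : L ≃ₐ[K] L, σ x = x) :
    x ∈ (algebraMap K L).range := by
  by_contra hxK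
  by_cases halg : IsAlgebraic K x
  · have hint : IsIntegral K x := halg.isIntegral
    set p := minpoly K x with hp
    have hp0 : p ≠ 0 := minpoly.ne_zero hint
    have hsep : p.Separable := (minpoly.irreducible hint).separable
    have hsplits : (p.map (algebraMap K L)).Splits := IsAlgClosed.splits _
    set M : IntermediateField K L := IntermediateField.adjoin K (p.rootSet L) with hM
    have hxroot : x ∈ p.rootSet L := by
      rw [Polynomial.mem_rootSet]
      exact ⟨hp0, minpoly.aeval K x⟩
    have hxM : x ∈ M := IntermediateField.subset_adjoin K _ hxroot
    -- there is another root y ≠ x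
    have hcard : 1 < Fintype.card (p.rootSet L) := by
      rw [Polynomial.card_rootSet_eq_natDegree hsep hsplits]
      rcases Nat.lt_or_ge p.natDegree 2 with h2 | h2
      · interval_cases hdeg : p.natDegree
        · exact absurd hdeg (minpoly.natDegree_pos hint).ne'
        · exact absurd (minpoly.natDegree_eq_one_iff.mp hdeg) hxK
      · exact h2
    obtain ⟨⟨y, hyroot⟩, hyx⟩ := Fintype.exists_ne_of_one_lt_card hcard ⟨x, hxroot⟩
    have hyneq : y ≠ x := fun hyx' => hyx (Subtype.ext hyx')
    have hyM : y ∈ M := IntermediateField.subset_adjoin K _ hyroot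
    -- M is normal over K
    have hsf : p.IsSplittingField K M :=
      IntermediateField.adjoin_rootSet_isSplittingField hsplits
    haveI := hsf
    haveI : Normal K M := Normal.of_isSplittingField p
    set x' : M := ⟨x, hxM⟩
    set y' : M := ⟨y, hyM⟩
    have hminx : minpoly K x' = p := by
      rw [hp, ← minpoly.algebraMap_eq (algebraMap M L).injective x']
      rfl
    have hx'alg : IsAlgebraic K x' := ⟨p, hp0, by
      apply (map_eq_zero_iff _ (algebraMap M L).injective).mp
      rw [← Polynomial.aeval_algebraMap_apply]
      exact minpoly.aeval K x⟩
    have hev : Polynomial.aeval y' (minpoly K x') = 0 := by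
      apply (map_eq_zero_iff _ (algebraMap M L).injective).mp
      rw [← Polynomial.aeval_algebraMap_apply, hminx]
      exact (Polynomial.mem_rootSet.mp hyroot).2
    obtain ⟨τ, hτ⟩ := minpoly.exists_algEquiv_of_root' (K := K) (L := M) hx'alg hev
    obtain ⟨σ, hσ⟩ := myExtendAut (L := L) K (↥M) τ
    have hcontra : σ x = y := by
      have := hσ x'
      rw [hτ] at this
      exact this
    rw [h σ] at hcontra
    exact hyneq hcontra.symm
  · obtain ⟨σ, hσ⟩ := myMoveTrans (K := K) halg
    exact hσ (h σ)

end


/-- Descent for linear maps: an `L`-linear map `F : V ⊗_K L → W ⊗_K L` commuting with the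
semilinear actions of `Aut_K(L)` (given by `σ ⊗ id`) descends uniquely to a `K`-linear map
`f : V → W` with `F = f ⊗_K id_L`. -/
theorem stmt1 (K L V W : Type*) [Field K] [Field L] [CharZero K] [IsAlgClosed L]
    [Algebra K L] [AddCommGroup V] [Module K V] [AddCommGroup W] [Module K W]
    (F : L ⊗[K] V →ₗ[L] L ⊗[K] W)
    (hF : ∀ σ : L ≃ₐ[K] L,
      (LinearMap.rTensor W (σ.toLinearMap : L →ₗ[K] L)).comp (F.restrictScalars K)
        = (F.restrictScalars K).comp (LinearMap.rTensor V (σ.toLinearMap : L →ₗ[K] L))) :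
    ∃! f : V →ₗ[K] W, F = LinearMap.baseChange L f := by
  classical
  set b := Module.Basis.ofVectorSpace K W
  set B := Algebra.TensorProduct.basis L b with hB
  -- coordinates of rTensor σ
  have hrepr : ∀ (σ : L ≃ₐ[K] L) (z : L ⊗[K] W) (i),
      B.repr (LinearMap.rTensor W (σ.toLinearMap : L →ₗ[K] L) z) i = σ (B.repr z i) := by
    intro σ z i
    induction z using TensorProduct.induction_on with
    | zero => simp
    | tmul a m =>
      rw [LinearMap.rTensor_tmul]
      simp only [hB, Algebra.TensorProduct.basis_repr_tmul, AlgEquiv.toLinearMap_apply,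
        Finsupp.smul_apply, Finsupp.mapRange_apply, smul_eq_mul]
      rw [map_mul, AlgEquiv.commutes]
    | add z₁ z₂ h₁ h₂ =>
      simp only [map_add, Finsupp.add_apply, h₁, h₂]
  -- injectivity of w ↦ 1 ⊗ w
  have hinj : ∀ w w' : W, (1 : L) ⊗ₜ[K] w = 1 ⊗ₜ[K] w' → w = w' := by
    intro w w' hww
    have := congrArg (fun z => B.repr z) hww
    simp only [hB, Algebra.TensorProduct.basis_repr_tmul, one_smul] at this
    have hb : b.repr w = b.repr w' := by
      ext i
      have := DFunLike.congr_fun this i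
      simp only [Finsupp.mapRange_apply] at this
      exact (algebraMap K L).injective this
    exact b.repr.injective hb
  -- every fixed element is of the form 1 ⊗ w
  have hdescend : ∀ u : L ⊗[K] W,
      (∀ σ : L ≃ₐ[K] L, LinearMap.rTensor W (σ.toLinearMap : L →ₗ[K] L) u = u) →
      ∃ w : W, u = 1 ⊗ₜ[K] w := by
    intro u hu
    have hfixed : ∀ i, ∀ σ : L ≃ₐ[K] L, σ (B.repr u i) = B.repr u i := by
      intro i σ
      conv_rhs => rw [← hu σ]
      exact (hrepr σ u i).symm
    have hmem : ∀ i, B.repr u i ∈ (algebraMap K L).range := fun i =>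
      myFixedMem (fun σ => hfixed i σ)
    choose d hd using hmem
    refine ⟨∑ i ∈ (B.repr u).support, d i • b i, ?_⟩
    have hsum : (1 : L) ⊗ₜ[K] (∑ i ∈ (B.repr u).support, d i • b i)
        = ∑ i ∈ (B.repr u).support, B.repr u i • B i := by
      rw [TensorProduct.tmul_sum]
      refine Finset.sum_congr rfl fun i _ => ?_
      rw [TensorProduct.tmul_smul, ← hd i, algebraMap_smul, hB,
        Algebra.TensorProduct.basis_apply]
    have htot := B.linearCombination_repr u
    rw [Finsupp.linearCombination_apply, Finsupp.sum] at htot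
    rw [hsum, htot]
  -- F (1 ⊗ v) is fixed by all σ
  have hfixF : ∀ v : V, ∀ σ : L ≃ₐ[K] L,
      LinearMap.rTensor W (σ.toLinearMap : L →ₗ[K] L) (F ((1 : L) ⊗ₜ[K] v))
        = F ((1 : L) ⊗ₜ[K] v) := by
    intro v σ
    have h := DFunLike.congr_fun (hF σ) ((1 : L) ⊗ₜ[K] v)
    simp only [LinearMap.comp_apply, LinearMap.restrictScalars_apply, LinearMap.rTensor_tmul,
      AlgEquiv.toLinearMap_apply, map_one] at h
    exact h
  choose f0 hf0 using fun v : V => hdescend (F ((1 : L) ⊗ₜ[K] v)) (hfixF v)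
  have hadd : ∀ v v', f0 (v + v') = f0 v + f0 v' := by
    intro v v'
    apply hinj
    rw [← hf0 (v + v'),
      show (1 : L) ⊗ₜ[K] (v + v') = (1 : L) ⊗ₜ[K] v + (1 : L) ⊗ₜ[K] v' from
        TensorProduct.tmul_add 1 v v',
      map_add, hf0 v, hf0 v', ← TensorProduct.tmul_add]
  have hsmul : ∀ (k : K) (v : V), f0 (k • v) = k • f0 v := by
    intro k v
    apply hinj
    rw [← hf0 (k • v), TensorProduct.tmul_smul, TensorProduct.tmul_smul,
      LinearMap.map_smul_of_tower, hf0 v]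
  let f : V →ₗ[K] W :=
    { toFun := f0
      map_add' := hadd
      map_smul' := hsmul }
  have hFf : ∀ v : V, F ((1 : L) ⊗ₜ[K] v) = (1 : L) ⊗ₜ[K] f v := fun v => hf0 v
  refine ⟨f, ?_, ?_⟩
  · apply LinearMap.ext
    intro z
    induction z using TensorProduct.induction_on with
    | zero => simp
    | tmul c v =>
      have h1 : (c : L) ⊗ₜ[K] v = c • ((1 : L) ⊗ₜ[K] v) := by
        rw [TensorProduct.smul_tmul', smul_eq_mul, mul_one]
      rw [h1, map_smul, map_smul, hFf v, LinearMap.baseChange_tmul]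
    | add z₁ z₂ h₁ h₂ =>
      rw [map_add, map_add, h₁, h₂]
  · intro g hg
    apply LinearMap.ext
    intro v
    apply hinj
    have := hFf v
    rw [hg] at this
    rw [← this, LinearMap.baseChange_tmul]
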